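/- Let 𝓗 be a finite nonempty family of finite simple graphs with γ_𝓗 ≥ 1. There exists N such that for every integer n ≥ N the following holds: if G is an n-vertex graph containing a set L of exactly γ_𝓗 vertices each of which has degree n−1 in G (i.e., each vertex of L is adjacent to all other vertices of G), then G is 𝓗-subdivision-free if and only if the induced subgraph G − L is Γ(𝓗)-subdivision-free. -/

import Mathlib

open Matrix

namespace SubdivPaper

/-- A vertex set is independent in `G`. -/
def IsIndep {V : Type*} (G : SimpleGraph V) (s : Set V) : Prop :=
  s.Pairwise fun u v => ¬ G.Adj u v

/-- The independence number `α(G)` of a finite graph `G`. -/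
noncomputable def indepNum {V : Type*} [Fintype V] (G : SimpleGraph V) : ℕ :=
  sSup {k : ℕ | ∃ s : Finset V, IsIndep G ↑s ∧ s.card = k}

/-- `γ_H := |V(H)| - α(H) - 1`. -/
noncomputable def gammaOf {V : Type*} [Fintype V] (G : SimpleGraph V) : ℕ :=
  Fintype.card V - indepNum G - 1

/-- The set of internal vertices of a walk (support minus the two endpoints). -/
def WalkInternal {V : Type*} {G : SimpleGraph V} {a b : V} (p : G.Walk a b) : Set V :=
  {w | w ∈ p.support ∧ w ≠ a ∧ w ≠ b}

/-- `G` contains a subdivision of `H`: there are an injective map `φ` on vertices and,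
for each edge `uv` of `H`, a path in `G` joining `φ u` and `φ v`, such that these paths are
pairwise internally vertex-disjoint and no internal vertex lies in the image of `φ`. -/
def ContainsSubdiv {V W : Type*} (G : SimpleGraph V) (H : SimpleGraph W) : Prop :=
  ∃ φ : W → V, Function.Injective φ ∧
    ∃ P : ∀ ⦃u v : W⦄, H.Adj u v → G.Walk (φ u) (φ v),
      (∀ ⦃u v : W⦄ (h : H.Adj u v), (P h).IsPath) ∧
      (∀ ⦃u v : W⦄ (h : H.Adj u v), P h.symm = (P h).reverse) ∧
      (∀ ⦃u v : W⦄ (h : H.Adj u v), ∀ w ∈ WalkInternal (P h), w ∉ Set.range φ) ∧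
      (∀ ⦃u v u' v' : W⦄ (h : H.Adj u v) (h' : H.Adj u' v'),
        s(u, v) ≠ s(u', v') → WalkInternal (P h) ∩ WalkInternal (P h') = ∅)

variable {ι : Type*}

/-- `G` is `𝓗`-subdivision-free. -/
def SubdivFreeFam (m : ι → ℕ) (ℋ : ∀ i, SimpleGraph (Fin (m i)))
    {V : Type*} (G : SimpleGraph V) : Prop :=
  ∀ i, ¬ ContainsSubdiv G (ℋ i)

/-- `γ_𝓗 := min_{H ∈ 𝓗} γ_H`. -/
noncomputable def gammaFam (m : ι → ℕ) (ℋ : ∀ i, SimpleGraph (Fin (m i))) : ℕ :=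
  sInf {g : ℕ | ∃ i, gammaOf (ℋ i) = g}

open Classical in
/-- The real adjacency matrix of a graph on `Fin n`. -/
noncomputable def adjMat {n : ℕ} (G : SimpleGraph (Fin n)) : Matrix (Fin n) (Fin n) ℝ :=
  Matrix.of fun u v => if G.Adj u v then (1 : ℝ) else 0

/-- The spectral radius: the largest eigenvalue of the adjacency matrix. -/
noncomputable def specRad {n : ℕ} (G : SimpleGraph (Fin n)) : ℝ :=
  sSup {t : ℝ | ∃ x : Fin n → ℝ, x ≠ 0 ∧ adjMat G *ᵥ x = t • x}

/-- `spex(n, 𝓗_sub)`. -/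
noncomputable def spex (n : ℕ) (m : ι → ℕ) (ℋ : ∀ i, SimpleGraph (Fin (m i))) : ℝ :=
  sSup {ρ : ℝ | ∃ G : SimpleGraph (Fin n), SubdivFreeFam m ℋ G ∧ specRad G = ρ}

/-- `SPEX(n, 𝓗_sub)`: the `n`-vertex `𝓗`-subdivision-free graphs of maximum spectral radius. -/
def SPEX (n : ℕ) (m : ι → ℕ) (ℋ : ∀ i, SimpleGraph (Fin (m i))) :
    Set (SimpleGraph (Fin n)) :=
  {G | SubdivFreeFam m ℋ G ∧
    ∀ G' : SimpleGraph (Fin n), SubdivFreeFam m ℋ G' → specRad G' ≤ specRad G}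

/-- The generalized book `B_{s,t} = K_s ∨ (t K_1)`. -/
def book (s t : ℕ) : SimpleGraph (Fin (s + t)) :=
  SimpleGraph.fromRel fun u v => (u : ℕ) < s ∨ (v : ℕ) < s

/-- `G` contains a spanning subgraph isomorphic to `B`. -/
def HasSpanningSubgraphIso {V W : Type*} (G : SimpleGraph V) (B : SimpleGraph W) : Prop :=
  ∃ f : W ≃ V, ∀ u v : W, B.Adj u v → G.Adj (f u) (f v)

/-- The graph obtained from `G` by adding the edge `uv`. -/
def addEdge {V : Type*} (G : SimpleGraph V) (u v : V) : SimpleGraph V :=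
  G ⊔ SimpleGraph.fromEdgeSet {s(u, v)}

/-- `G` is `𝓗`-subdivision-saturated. -/
def SubdivSatFam (m : ι → ℕ) (ℋ : ∀ i, SimpleGraph (Fin (m i)))
    {V : Type*} (G : SimpleGraph V) : Prop :=
  SubdivFreeFam m ℋ G ∧
    ∀ u v : V, u ≠ v → ¬ G.Adj u v → ∃ i, ContainsSubdiv (addEdge G u v) (ℋ i)

/-- `max_{H ∈ 𝓗} |V(H)|`. -/
noncomputable def maxOrderFam (m : ι → ℕ) : ℕ := sSup (Set.range m)

/-- The minimum order of a graph `H ∈ 𝓗` with `γ_H = γ_𝓗` (the order of a minimal graph). -/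
noncomputable def minOrderAtGamma (m : ι → ℕ) (ℋ : ∀ i, SimpleGraph (Fin (m i))) : ℕ :=
  sInf {k : ℕ | ∃ i, gammaOf (ℋ i) = gammaFam m ℋ ∧ m i = k}

/-- `α_𝓗`: the independence number of a minimal graph with respect to `𝓗`. -/
noncomputable def alphaFam (m : ι → ℕ) (ℋ : ∀ i, SimpleGraph (Fin (m i))) : ℕ :=
  minOrderAtGamma m ℋ - gammaFam m ℋ - 1

/-- `S'' = {v ∉ L : L ⊆ N_G(v)}`. -/
def Sdd {n : ℕ} (G : SimpleGraph (Fin n)) (L : Finset (Fin n)) : Set (Fin n) :=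
  {v | v ∉ L ∧ ∀ w ∈ L, G.Adj w v}

/-- `S' = (V ∖ L) ∖ S''`. -/
def Sd {n : ℕ} (G : SimpleGraph (Fin n)) (L : Finset (Fin n)) : Set (Fin n) :=
  {v | v ∉ L ∧ ¬ ∀ w ∈ L, G.Adj w v}

/-- `L^λ = {u : x_u ≥ (10 C)^{-λ} x_{u*}}`. -/
def Lset {n : ℕ} (x : Fin n → ℝ) (u₀ : Fin n) (C : ℝ) (lam : ℕ) : Set (Fin n) :=
  {u | ((10 * C) ^ lam)⁻¹ * x u₀ ≤ x u}

/-- `N_i(u)`: vertices at distance exactly `i` from `u`. -/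
def Nset {n : ℕ} (G : SimpleGraph (Fin n)) (u : Fin n) (i : ℕ) : Set (Fin n) :=
  {v | G.dist u v = i}

/-- `H[S] ∈ Γ_s(H)` is irreducible: `|S| = s` and no `s`-vertex induced subgraph of `H` is
isomorphic to a proper subgraph of `H[S]`. -/
def IrreducibleInduced {h : ℕ} (H : SimpleGraph (Fin h)) (s : ℕ) (S : Finset (Fin h)) : Prop :=
  S.card = s ∧
    ¬ ∃ (T : Finset (Fin h)) (B' : SimpleGraph ((S : Set (Fin h)))),
        T.card = s ∧ B' ≤ SimpleGraph.induce (S : Set (Fin h)) H ∧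
        B' ≠ SimpleGraph.induce (S : Set (Fin h)) H ∧
        Nonempty (SimpleGraph.induce (T : Set (Fin h)) H ≃g B')

/-- `Q` is `Γ(𝓗)`-subdivision-free. -/
def GammaFree (m : ι → ℕ) (ℋ : ∀ i, SimpleGraph (Fin (m i)))
    {X : Type*} (Q : SimpleGraph X) : Prop :=
  ∀ (i : ι) (S : Finset (Fin (m i))),
    IrreducibleInduced (ℋ i) (m i - gammaFam m ℋ) S →
    ¬ ContainsSubdiv Q (SimpleGraph.induce (S : Set (Fin (m i))) (ℋ i))

/-- `Q` is `Γ(𝓗)`-subdivision-saturated. -/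
def GammaSat (m : ι → ℕ) (ℋ : ∀ i, SimpleGraph (Fin (m i)))
    {X : Type*} (Q : SimpleGraph X) : Prop :=
  GammaFree m ℋ Q ∧
    ∀ u v : X, u ≠ v → ¬ Q.Adj u v →
      ∃ (i : ι) (S : Finset (Fin (m i))),
        IrreducibleInduced (ℋ i) (m i - gammaFam m ℋ) S ∧
        ContainsSubdiv (addEdge Q u v) (SimpleGraph.induce (S : Set (Fin (m i))) (ℋ i))

/-- `G` is `{H}`-subdivision-saturated (single forbidden graph). -/
def SubdivSatSingle {W V : Type*} (H : SimpleGraph W) (G : SimpleGraph V) : Prop :=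
  ¬ ContainsSubdiv G H ∧
    ∀ u v : V, u ≠ v → ¬ G.Adj u v → ContainsSubdiv (addEdge G u v) H

/-! ### Auxiliary lemmas -/

section Aux

open SimpleGraph

variable {V V' W W' : Type*}

lemma walkInternal_map {G : SimpleGraph V} {G' : SimpleGraph V'} (f : G →g G')
    (hf : Function.Injective f) {a b : V} (p : G.Walk a b) :
    WalkInternal (p.map f) = f '' WalkInternal p := by
  ext w
  constructor
  · rintro ⟨hw, hwa, hwb⟩
    rw [SimpleGraph.Walk.support_map, List.mem_map] at hw
    obtain ⟨x, hx, rfl⟩ := hw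
    exact ⟨x, ⟨hx, fun h => hwa (by rw [h]), fun h => hwb (by rw [h])⟩, rfl⟩
  · rintro ⟨x, ⟨hx, hxa, hxb⟩, rfl⟩
    refine ⟨?_, fun h => hxa (hf h), fun h => hxb (hf h)⟩
    rw [SimpleGraph.Walk.support_map, List.mem_map]
    exact ⟨x, hx, rfl⟩

lemma walkInternal_copy {G : SimpleGraph V} {a b a' b' : V} (p : G.Walk a b)
    (h : a = a') (h' : b = b') : WalkInternal (p.copy h h') = WalkInternal p := by
  subst h; subst h'; rw [SimpleGraph.Walk.copy_rfl_rfl]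

lemma walkInternal_singleEdge {G : SimpleGraph V} {a b : V} (h : G.Adj a b) :
    WalkInternal (SimpleGraph.Walk.cons h SimpleGraph.Walk.nil) = ∅ := by
  ext w
  simp only [WalkInternal, SimpleGraph.Walk.support_cons, SimpleGraph.Walk.support_nil,
    List.mem_cons, List.mem_singleton, Set.mem_setOf_eq, Set.mem_empty_iff_false, iff_false]
  rintro ⟨hw, hwa, hwb⟩
  rcases hw with h1 | h1 | h1 <;> simp_all

lemma ContainsSubdiv.map_G {G : SimpleGraph V} {G' : SimpleGraph V'} {H : SimpleGraph W}
    (f : G →g G') (hf : Function.Injective f) (h : ContainsSubdiv G H) :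
    ContainsSubdiv G' H := by
  obtain ⟨φ, hφ, P, hpath, hsymm, hint, hdisj⟩ := h
  refine ⟨f ∘ φ, hf.comp hφ, fun u v h => (P h).map f,
    fun u v h => SimpleGraph.Walk.map_isPath_of_injective hf (hpath h),
    fun u v h => by
      show (P h.symm).map f = ((P h).map f).reverse
      rw [hsymm h, SimpleGraph.Walk.reverse_map],
    fun u v h w hw hr => ?_, fun u v u' v' h h' hne => ?_⟩
  · rw [walkInternal_map f hf] at hw
    obtain ⟨x, hx, rfl⟩ := hw
    obtain ⟨z, hz⟩ := hr
    exact hint h x hx ⟨z, hf hz⟩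
  · rw [walkInternal_map f hf, walkInternal_map f hf, ← Set.image_inter hf,
      hdisj h h' hne, Set.image_empty]

lemma ContainsSubdiv.of_hom {G : SimpleGraph V} {H : SimpleGraph W} {H' : SimpleGraph W'}
    (f : H' →g H) (hf : Function.Injective f) (h : ContainsSubdiv G H) :
    ContainsSubdiv G H' := by
  obtain ⟨φ, hφ, P, hpath, hsymm, hint, hdisj⟩ := h
  refine ⟨φ ∘ f, hφ.comp hf, fun u v h => P (f.map_adj h),
    fun u v h => hpath _,
    fun u v h => hsymm (f.map_adj h),
    fun u v h w hw hr => ?_, fun u v u' v' h h' hne => ?_⟩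
  · obtain ⟨z, hz⟩ := hr
    exact hint (f.map_adj h) w hw ⟨f z, hz⟩
  · refine hdisj (f.map_adj h) (f.map_adj h') fun he => hne ?_
    rcases Sym2.eq_iff.1 he with ⟨h1, h2⟩ | ⟨h1, h2⟩
    · exact Sym2.eq_iff.2 (Or.inl ⟨hf h1, hf h2⟩)
    · exact Sym2.eq_iff.2 (Or.inr ⟨hf h1, hf h2⟩)

/-- The canonical homomorphism from an induced subgraph into the ambient graph. -/
abbrev induceEmb (G : SimpleGraph V) (s : Set V) : G.induce s →g G :=
  ⟨Subtype.val, fun h => h⟩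

lemma induceEmb_injective (G : SimpleGraph V) (s : Set V) :
    Function.Injective (induceEmb G s) := Subtype.val_injective

/-- Lift a walk whose support lies in `s` to the induced subgraph on `s`. -/
def liftWalk {G : SimpleGraph V} {s : Set V} :
    ∀ {a b : V} (p : G.Walk a b), (∀ x ∈ p.support, x ∈ s) →
      ∀ (ha : a ∈ s) (hb : b ∈ s), (G.induce s).Walk ⟨a, ha⟩ ⟨b, hb⟩
  | _, _, SimpleGraph.Walk.nil, _, _, _ => SimpleGraph.Walk.nil
  | _, _, SimpleGraph.Walk.cons hadj p, hp, ha, hb =>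
      SimpleGraph.Walk.cons (by exact hadj)
        (liftWalk p (fun x hx => hp x (by simp [hx]))
          (hp _ (by simp [SimpleGraph.Walk.start_mem_support])) hb)

lemma liftWalk_map {G : SimpleGraph V} {s : Set V} :
    ∀ {a b : V} (p : G.Walk a b) (hp : ∀ x ∈ p.support, x ∈ s) (ha : a ∈ s) (hb : b ∈ s),
      (liftWalk p hp ha hb).map (induceEmb G s) = p
  | _, _, SimpleGraph.Walk.nil, _, _, _ => rfl
  | _, _, SimpleGraph.Walk.cons hadj p, hp, ha, hb => by
      exact congrArg (SimpleGraph.Walk.cons hadj) (liftWalk_map p _ _ hb)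

lemma liftWalk_isPath {G : SimpleGraph V} {s : Set V} {a b : V} {p : G.Walk a b}
    {hp : ∀ x ∈ p.support, x ∈ s} {ha : a ∈ s} {hb : b ∈ s} (hw : p.IsPath) :
    (liftWalk p hp ha hb).IsPath :=
  SimpleGraph.Walk.IsPath.of_map (f := induceEmb G s) (by rwa [liftWalk_map])

lemma mem_liftWalk_internal {G : SimpleGraph V} {s : Set V} {a b : V} {p : G.Walk a b}
    {hp : ∀ x ∈ p.support, x ∈ s} {ha : a ∈ s} {hb : b ∈ s} {w : s} :
    w ∈ WalkInternal (liftWalk p hp ha hb) ↔ (w : V) ∈ WalkInternal p := by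
  have h1 : WalkInternal p = Subtype.val '' WalkInternal (liftWalk p hp ha hb) := by
    conv_lhs => rw [← liftWalk_map p hp ha hb]
    rw [walkInternal_map _ (induceEmb_injective G s)]
    rfl
  have h1' := Set.ext_iff.1 h1 (w : V)
  constructor
  · intro hw
    exact h1'.2 ⟨w, hw, rfl⟩
  · intro hw
    obtain ⟨x, hx, hxw⟩ := h1'.1 hw
    rwa [Subtype.val_injective hxw] at hx

end Aux

section Main

variable {n h γ : ℕ}

/-- Deleting the small set `L` from a graph with an `H`-subdivision leaves a subdivision of
some induced subgraph of `H` on `h - γ` vertices. -/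
lemma exists_induced_subdiv (H : SimpleGraph (Fin h)) (G : SimpleGraph (Fin n))
    (L : Finset (Fin n)) (hL : L.card = γ)
    (hsub : ContainsSubdiv G H) :
    ∃ S : Finset (Fin h), S.card = h - γ ∧
      ContainsSubdiv (SimpleGraph.induce ((L : Set (Fin n))ᶜ) G)
        (SimpleGraph.induce (S : Set (Fin h)) H) := by
  classical
  obtain ⟨φ, hφ, P, hpath, hsymm, hint, hdisj⟩ := hsub
  set xF : Fin n → Finset (Fin h) := fun v =>
    if h1 : ∃ z, φ z = v then {h1.choose}
    else if h2 : ∃ (a b : Fin h) (hadj : H.Adj a b), v ∈ WalkInternal (P hadj) then {h2.choose}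
    else ∅ with hxF
  set X : Finset (Fin h) := L.biUnion xF with hX
  have hXcard : X.card ≤ γ := by
    calc X.card ≤ ∑ v ∈ L, (xF v).card := Finset.card_biUnion_le
    _ ≤ ∑ _v ∈ L, 1 := Finset.sum_le_sum (fun v _ => by
        simp only [hxF]; split_ifs <;> simp)
    _ = γ := by simp [hL]
  obtain ⟨S, hSX, hScard⟩ : ∃ S ⊆ Xᶜ, S.card = h - γ := by
    apply Finset.exists_subset_card_eq
    have hc : Xᶜ.card = h - X.card := by
      rw [Finset.card_compl, Fintype.card_fin]
    omega
  have hSX' : ∀ u ∈ S, u ∉ X := fun u hu => Finset.mem_compl.1 (hSX hu)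
  have hphi : ∀ u ∈ S, φ u ∉ L := by
    intro u hu hul
    have h1 : ∃ z, φ z = φ u := ⟨u, rfl⟩
    have hm : u ∈ xF (φ u) := by
      simp only [hxF, dif_pos h1]
      simp [hφ h1.choose_spec]
    exact hSX' u hu (Finset.mem_biUnion.2 ⟨φ u, hul, hm⟩)
  have hcleanInt : ∀ {a b : Fin h} (hadj : H.Adj a b), a ∈ S → b ∈ S →
      ∀ x ∈ WalkInternal (P hadj), x ∉ L := by
    intro a b hadj ha hb x hx hxl
    have hxr : x ∉ Set.range φ := hint hadj x hx
    have h1 : ¬ ∃ z, φ z = x := fun ⟨z, hz⟩ => hxr ⟨z, hz⟩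
    have h2 : ∃ (a' b' : Fin h) (hadj' : H.Adj a' b'), x ∈ WalkInternal (P hadj') :=
      ⟨a, b, hadj, hx⟩
    have hmem : h2.choose ∈ xF x := by
      simp only [hxF, dif_neg h1, dif_pos h2]
      simp
    obtain ⟨b', hadj', hx'⟩ := h2.choose_spec
    by_cases he : s(h2.choose, b') = s(a, b)
    · have hXc : h2.choose ∈ X := Finset.mem_biUnion.2 ⟨x, hxl, hmem⟩
      rcases Sym2.eq_iff.1 he with ⟨hca, _⟩ | ⟨hca, _⟩
      · exact hSX' a ha (hca ▸ hXc)
      · exact hSX' b hb (hca ▸ hXc)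
    · have hd := hdisj hadj' hadj he
      have : x ∈ (∅ : Set (Fin n)) := hd ▸ Set.mem_inter hx' hx
      exact this
  have hclean : ∀ {a b : Fin h} (hadj : H.Adj a b), a ∈ S → b ∈ S →
      ∀ x ∈ (P hadj).support, x ∈ ((L : Set (Fin n))ᶜ) := by
    intro a b hadj ha hb x hx
    simp only [Set.mem_compl_iff, Finset.mem_coe]
    intro hxl
    by_cases hxa : x = φ a
    · exact hphi a ha (hxa ▸ hxl)
    by_cases hxb : x = φ b
    · exact hphi b hb (hxb ▸ hxl)
    exact hcleanInt hadj ha hb x ⟨hx, hxa, hxb⟩ hxl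
  refine ⟨S, hScard, ?_⟩
  have hmemS : ∀ u : (S : Set (Fin h)), (u : Fin h) ∈ S := fun u => u.2
  have hφmem : ∀ u : (S : Set (Fin h)), φ u ∈ ((L : Set (Fin n))ᶜ) :=
    fun u => by simpa using hphi u (hmemS u)
  refine ⟨fun u => ⟨φ u, hφmem u⟩, ?_, ?_⟩
  · intro a b hab
    exact Subtype.ext (hφ (congrArg Subtype.val hab))
  · refine ⟨fun u v hadj =>
      liftWalk (P hadj) (hclean hadj (hmemS u) (hmemS v)) _ _,
      fun u v hadj => liftWalk_isPath (hpath hadj), ?_, ?_, ?_⟩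
    · intro u v hadj
      apply SimpleGraph.Walk.map_injective_of_injective
        (induceEmb_injective G ((L : Set (Fin n))ᶜ))
      have e1 := liftWalk_map (P hadj.symm) (hclean hadj.symm (hmemS v) (hmemS u)) (hφmem v) (hφmem u)
      have e2 := liftWalk_map (P hadj) (hclean hadj (hmemS u) (hmemS v)) (hφmem u) (hφmem v)
      exact e1.trans ((hsymm hadj).trans
        ((congrArg SimpleGraph.Walk.reverse e2).symm.trans (SimpleGraph.Walk.reverse_map ..)))
    · intro u v hadj w hw hr
      obtain ⟨z, hz⟩ := hr
      have hwint : (w : Fin n) ∈ WalkInternal (P hadj) := mem_liftWalk_internal.1 hw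
      exact hint hadj w hwint ⟨z, congrArg Subtype.val hz⟩
    · intro u v u' v' hadj hadj' hne
      ext w
      simp only [Set.mem_inter_iff, Set.mem_empty_iff_false, iff_false, not_and]
      intro hw hw'
      have h1 := mem_liftWalk_internal.1 hw
      have h2 := mem_liftWalk_internal.1 hw'
      have hne' : s((u : Fin h), (v : Fin h)) ≠ s((u' : Fin h), (v' : Fin h)) := by
        intro he
        apply hne
        rcases Sym2.eq_iff.1 he with ⟨h1, h2⟩ | ⟨h1, h2⟩
        · exact Sym2.eq_iff.2 (Or.inl ⟨Subtype.ext h1, Subtype.ext h2⟩)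
        · exact Sym2.eq_iff.2 (Or.inr ⟨Subtype.ext h1, Subtype.ext h2⟩)
      have hd := hdisj hadj hadj' hne'
      have : (w : Fin n) ∈ (∅ : Set (Fin n)) := hd ▸ Set.mem_inter h1 h2
      exact this

/-- Descend from a subdivision of an induced subgraph to one of an irreducible induced
subgraph with the same number of vertices. -/
lemma descend_to_irreducible {s : ℕ} (H : SimpleGraph (Fin h)) {X : Type*} (Q : SimpleGraph X) :
    ∀ (k : ℕ) (S : Finset (Fin h)),
      (SimpleGraph.induce (S : Set (Fin h)) H).edgeSet.ncard ≤ k →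
      S.card = s → ContainsSubdiv Q (SimpleGraph.induce (S : Set (Fin h)) H) →
      ∃ T : Finset (Fin h), IrreducibleInduced H s T ∧
        ContainsSubdiv Q (SimpleGraph.induce (T : Set (Fin h)) H) := by
  classical
  intro k
  induction k with
  | zero =>
    intro S hk hcard hsub
    by_cases hirr : IrreducibleInduced H s S
    · exact ⟨S, hirr, hsub⟩
    · rw [IrreducibleInduced] at hirr
      push_neg at hirr
      obtain ⟨T, B', hT, hle, hne, ⟨e⟩⟩ := hirr hcard
      have hlt : B' < SimpleGraph.induce (S : Set (Fin h)) H := lt_of_le_of_ne hle hne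
      have hss := (SimpleGraph.edgeSet_ssubset_edgeSet).2 hlt
      have := Set.ncard_lt_ncard hss (Set.toFinite _)
      omega
  | succ k ih =>
    intro S hk hcard hsub
    by_cases hirr : IrreducibleInduced H s S
    · exact ⟨S, hirr, hsub⟩
    · rw [IrreducibleInduced] at hirr
      push_neg at hirr
      obtain ⟨T, B', hT, hle, hne, ⟨e⟩⟩ := hirr hcard
      have hlt : B' < SimpleGraph.induce (S : Set (Fin h)) H := lt_of_le_of_ne hle hne
      have hss := (SimpleGraph.edgeSet_ssubset_edgeSet).2 hlt
      have hcardlt := Set.ncard_lt_ncard hss (Set.toFinite _)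
      have hsubB : ContainsSubdiv Q B' :=
        hsub.of_hom (SimpleGraph.Hom.ofLE hle) Function.injective_id
      have hsubT : ContainsSubdiv Q (SimpleGraph.induce (T : Set (Fin h)) H) :=
        hsubB.of_hom e.toEmbedding.toHom (e.toEmbedding.injective)
      have hedgeeq : (SimpleGraph.induce (T : Set (Fin h)) H).edgeSet.ncard =
          B'.edgeSet.ncard := by
        rw [← Nat.card_coe_set_eq, ← Nat.card_coe_set_eq]
        exact Nat.card_congr e.mapEdgeSet
      exact ih T (by omega) hT hsubT

/-- If `G` has `|L| = γ` universal vertices and `G - L` contains a subdivision of `H[S]`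
with `|S| = h - γ`, then `G` contains an `H`-subdivision. -/
lemma subdiv_of_induced (H : SimpleGraph (Fin h)) (G : SimpleGraph (Fin n))
    (L : Finset (Fin n)) (hL : L.card = γ) (hγh : γ ≤ h)
    (hLuniv : ∀ u ∈ L, ∀ v : Fin n, v ≠ u → G.Adj u v)
    (S : Finset (Fin h)) (hScard : S.card = h - γ)
    (hsub : ContainsSubdiv (SimpleGraph.induce ((L : Set (Fin n))ᶜ) G)
      (SimpleGraph.induce (S : Set (Fin h)) H)) :
    ContainsSubdiv G H := by
  classical
  obtain ⟨φ₀, hφ₀, P₀, hpath₀, hsymm₀, hint₀, hdisj₀⟩ := hsub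
  have hcc : Fintype.card (Sᶜ : Finset (Fin h)) = Fintype.card (L : Finset (Fin n)) := by
    rw [Fintype.card_coe, Fintype.card_coe, Finset.card_compl, Fintype.card_fin, hScard, hL]
    omega
  let g : (Sᶜ : Finset (Fin h)) ≃ (L : Finset (Fin n)) := Fintype.equivOfCardEq hcc
  let φ : Fin h → Fin n := fun u =>
    if hu : u ∈ S then (φ₀ ⟨u, hu⟩ : Fin n) else (g ⟨u, Finset.mem_compl.2 hu⟩ : Fin n)
  have hφS : ∀ u (hu : u ∈ S), φ u = (φ₀ ⟨u, hu⟩ : Fin n) := fun u hu => dif_pos hu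
  have hφSc : ∀ u (hu : u ∉ S), φ u = (g ⟨u, Finset.mem_compl.2 hu⟩ : Fin n) :=
    fun u hu => dif_neg hu
  have hφL : ∀ u, u ∈ S → φ u ∉ L := by
    intro u hu
    rw [hφS u hu]
    exact (φ₀ ⟨u, hu⟩).2
  have hφL' : ∀ u, u ∉ S → φ u ∈ L := by
    intro u hu
    rw [hφSc u hu]
    exact (g ⟨u, Finset.mem_compl.2 hu⟩).2
  have hφinj : Function.Injective φ := by
    intro a b hab
    by_cases ha : a ∈ S <;> by_cases hb : b ∈ S
    · rw [hφS a ha, hφS b hb] at hab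
      have := hφ₀ (Subtype.ext hab)
      exact congrArg Subtype.val this
    · exact absurd (hab ▸ hφL a ha) (by simp [hφL' b hb])
    · exact absurd (hab ▸ hφL' a ha) (by simp [hφL b hb])
    · rw [hφSc a ha, hφSc b hb] at hab
      have := g.injective (Subtype.ext hab)
      exact congrArg Subtype.val this
  have hPadj : ∀ {u v : Fin h}, H.Adj u v → ¬(u ∈ S ∧ v ∈ S) → G.Adj (φ u) (φ v) := by
    intro u v hadj hcase
    have hne : φ u ≠ φ v := fun e => hadj.ne (hφinj e)
    by_cases hu : u ∈ S
    · exact (hLuniv (φ v) (hφL' v (fun hv => hcase ⟨hu, hv⟩)) (φ u) hne).symm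
    · exact hLuniv (φ u) (hφL' u hu) (φ v) hne.symm
  have hadjInd : ∀ {u v : Fin h} (hadj : H.Adj u v) (hu : u ∈ S) (hv : v ∈ S),
      (SimpleGraph.induce (S : Set (Fin h)) H).Adj ⟨u, hu⟩ ⟨v, hv⟩ := fun hadj _ _ => hadj
  let P : ∀ ⦃u v : Fin h⦄, H.Adj u v → G.Walk (φ u) (φ v) := fun u v hadj =>
    if hc : u ∈ S ∧ v ∈ S then
      ((P₀ (hadjInd hadj hc.1 hc.2)).map (induceEmb G _)).copy
        (hφS u hc.1).symm (hφS v hc.2).symm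
    else SimpleGraph.Walk.cons (hPadj hadj hc) SimpleGraph.Walk.nil
  refine ⟨φ, hφinj, P, ?_, ?_, ?_, ?_⟩
  · intro u v hadj
    by_cases hc : u ∈ S ∧ v ∈ S
    · simp only [P, dif_pos hc, SimpleGraph.Walk.isPath_copy]
      exact SimpleGraph.Walk.map_isPath_of_injective
        (induceEmb_injective G _) (hpath₀ _)
    · simp only [P, dif_neg hc]
      rw [SimpleGraph.Walk.cons_isPath_iff]
      refine ⟨SimpleGraph.Walk.IsPath.nil, ?_⟩
      simp only [SimpleGraph.Walk.support_nil, List.mem_singleton]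
      exact fun e => hadj.ne (hφinj e)
  · intro u v hadj
    by_cases hc : u ∈ S ∧ v ∈ S
    · have hc' : v ∈ S ∧ u ∈ S := ⟨hc.2, hc.1⟩
      simp only [P, dif_pos hc, dif_pos hc']
      rw [SimpleGraph.Walk.reverse_copy]
      congr 1
      rw [SimpleGraph.Walk.reverse_map, ← hsymm₀ (hadjInd hadj hc.1 hc.2)]
    · have hc' : ¬(v ∈ S ∧ u ∈ S) := fun h => hc ⟨h.2, h.1⟩
      simp only [P, dif_neg hc, dif_neg hc']
      simp
  · intro u v hadj w hw hr
    obtain ⟨z, hz⟩ := hr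
    by_cases hc : u ∈ S ∧ v ∈ S
    · simp only [P, dif_pos hc] at hw
      rw [walkInternal_copy, walkInternal_map _ (induceEmb_injective G _)] at hw
      obtain ⟨x, hx, hxw⟩ := hw
      have hxw' : (x : Fin n) = w := hxw
      by_cases hz' : z ∈ S
      · refine hint₀ (hadjInd hadj hc.1 hc.2) x hx ⟨⟨z, hz'⟩, ?_⟩
        apply Subtype.val_injective
        rw [hxw', ← hz, hφS z hz']
      · have h1 : (x : Fin n) ∈ ((L : Set (Fin n))ᶜ) := x.2
        have h2 : φ z ∈ L := hφL' z hz'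
        rw [hxw', ← hz] at h1
        exact h1 (by simpa using h2)
    · simp only [P, dif_neg hc] at hw
      rw [walkInternal_singleEdge] at hw
      exact hw
  · intro u v u' v' hadj hadj' hne
    by_cases hc : u ∈ S ∧ v ∈ S
    · by_cases hc' : u' ∈ S ∧ v' ∈ S
      · simp only [P, dif_pos hc, dif_pos hc']
        rw [walkInternal_copy, walkInternal_copy,
          walkInternal_map _ (induceEmb_injective G _),
          walkInternal_map _ (induceEmb_injective G _),
          ← Set.image_inter (induceEmb_injective G _)]
        have hne2 : s((⟨u, hc.1⟩ : (S : Set (Fin h))), (⟨v, hc.2⟩ : (S : Set (Fin h)))) ≠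
            s((⟨u', hc'.1⟩ : (S : Set (Fin h))), (⟨v', hc'.2⟩ : (S : Set (Fin h)))) := by
          intro he
          apply hne
          rcases Sym2.eq_iff.1 he with ⟨h1, h2⟩ | ⟨h1, h2⟩
          · exact Sym2.eq_iff.2 (Or.inl ⟨congrArg Subtype.val h1, congrArg Subtype.val h2⟩)
          · exact Sym2.eq_iff.2 (Or.inr ⟨congrArg Subtype.val h1, congrArg Subtype.val h2⟩)
        rw [hdisj₀ (hadjInd hadj hc.1 hc.2) (hadjInd hadj' hc'.1 hc'.2) hne2,
          Set.image_empty]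
      · simp only [P, dif_neg hc']
        rw [walkInternal_singleEdge, Set.inter_empty]
    · simp only [P, dif_neg hc]
      rw [walkInternal_singleEdge, Set.empty_inter]

end Main

theorem statement17 {ι : Type*} [Fintype ι] [Nonempty ι]
    (m : ι → ℕ) (ℋ : ∀ i, SimpleGraph (Fin (m i)))
    (hγ : 1 ≤ gammaFam m ℋ) :
    ∃ N : ℕ, ∀ n : ℕ, N ≤ n →
      ∀ G : SimpleGraph (Fin n), ∀ L : Finset (Fin n), L.card = gammaFam m ℋ →
        (∀ u ∈ L, ∀ v : Fin n, v ≠ u → G.Adj u v) →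
        (SubdivFreeFam m ℋ G ↔
          GammaFree m ℋ (SimpleGraph.induce ((L : Set (Fin n))ᶜ) G)) := by
  classical
  refine ⟨0, fun n _ G L hLcard hLuniv => ?_⟩
  have hγle : ∀ i, gammaFam m ℋ ≤ m i := by
    intro i
    have h1 : gammaFam m ℋ ≤ gammaOf (ℋ i) := Nat.sInf_le ⟨i, rfl⟩
    have h2 : gammaOf (ℋ i) ≤ m i := by
      have hc := Fintype.card_fin (m i)
      unfold gammaOf
      omega
    omega
  constructor
  · intro hfree i S hirr hcon
    exact hfree i (subdiv_of_induced (ℋ i) G L hLcard (hγle i) hLuniv S hirr.1 hcon)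
  · intro hgfree i hcon
    obtain ⟨S, hScard, hsubQ⟩ := exists_induced_subdiv (ℋ i) G L hLcard hcon
    obtain ⟨T, hTirr, hTsub⟩ := descend_to_irreducible (ℋ i)
      (SimpleGraph.induce ((L : Set (Fin n))ᶜ) G)
      (SimpleGraph.induce (S : Set (Fin (m i))) (ℋ i)).edgeSet.ncard S le_rfl hScard hsubQ
    exact hgfree i T hTirr hTsub

end SubdivPaper
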